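/- Let O ∈ ℝ^{m×n} and F ∈ ℝ^{r×n}. If rank([O; F]) = rank(O), then there exists G ∈ ℝ^{r×m} with F = G·O, and consequently rank(F·Oᵀ) = rank(F). Conversely, if additionally rank(F) = r and F(Ker O) = {0}, then rank(F·Oᵀ) = r implies rank([O; F]) = rank(O). (This is the matrix-level content underlying the weak and strong duality between the functional observability rank test rank([O; F]) = rank(O) and the output controllability rank test rank(F·Oᵀ) = rank(F) for the dual pair.) -/

import Mathlib

open Matrix

lemma col_fact {m n k : ℕ} (A : Matrix (Fin m) (Fin n) ℝ) (B : Matrix (Fin m) (Fin k) ℝ)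
    (h : LinearMap.range A.mulVecLin ≤ LinearMap.range B.mulVecLin) :
    ∃ C : Matrix (Fin k) (Fin n) ℝ, A = B * C := by
  choose c hc using fun j => h (LinearMap.mem_range_self A.mulVecLin (Pi.single j 1))
  refine ⟨Matrix.of fun i j => c j i, ?_⟩
  ext i j
  have := congrFun (hc j) i
  simp only [Matrix.mulVecLin_apply, Matrix.mulVec_single_one] at this
  rw [Matrix.mul_apply, show A i j = A.col j i from rfl, ← this]
  simp [Matrix.mulVec, dotProduct]

lemma row_fact {m n k : ℕ} (A : Matrix (Fin m) (Fin n) ℝ) (B : Matrix (Fin k) (Fin n) ℝ)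
    (h : LinearMap.range Aᵀ.mulVecLin ≤ LinearMap.range Bᵀ.mulVecLin) :
    ∃ G : Matrix (Fin m) (Fin k) ℝ, A = G * B := by
  obtain ⟨C, hC⟩ := col_fact Aᵀ Bᵀ h
  exact ⟨Cᵀ, by rw [← transpose_transpose A, hC, transpose_mul, transpose_transpose]⟩

lemma range_fromCols {m n r : ℕ} (A : Matrix (Fin m) (Fin n) ℝ) (B : Matrix (Fin m) (Fin r) ℝ) :
    LinearMap.range (Matrix.fromCols A B).mulVecLin
      = LinearMap.range A.mulVecLin ⊔ LinearMap.range B.mulVecLin := by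
  apply le_antisymm
  · rintro _ ⟨v, rfl⟩
    have hv : v = Sum.elim (v ∘ Sum.inl) (v ∘ Sum.inr) := by
      funext x; cases x <;> rfl
    rw [Matrix.mulVecLin_apply, hv, Matrix.fromCols_mulVec_sumElim]
    exact Submodule.add_mem_sup ⟨_, rfl⟩ ⟨_, rfl⟩
  · refine sup_le ?_ ?_ <;> rintro _ ⟨v, rfl⟩
    · exact ⟨Sum.elim v 0, by simp [Matrix.fromCols_mulVec_sumElim]⟩
    · exact ⟨Sum.elim 0 v, by simp [Matrix.fromCols_mulVec_sumElim]⟩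

lemma rank_fromRows_of_mul {m n r : ℕ} (O : Matrix (Fin m) (Fin n) ℝ)
    (F : Matrix (Fin r) (Fin n) ℝ) (G : Matrix (Fin r) (Fin m) ℝ) (hG : F = G * O) :
    (Matrix.fromRows O F).rank = O.rank := by
  apply le_antisymm
  · have : Matrix.fromRows O F = Matrix.fromRows (1 : Matrix (Fin m) (Fin m) ℝ) G * O := by
      rw [Matrix.fromRows_mul, Matrix.one_mul, hG]
    rw [this]
    exact Matrix.rank_mul_le_right _ _
  · have : O = Matrix.fromCols (1 : Matrix (Fin m) (Fin m) ℝ) (0 : Matrix (Fin m) (Fin r) ℝ)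
        * Matrix.fromRows O F := by
      rw [Matrix.fromCols_mul_fromRows]; simp
    conv_lhs => rw [this]
    exact Matrix.rank_mul_le_right _ _

lemma ker_fact {m n r : ℕ} (O : Matrix (Fin m) (Fin n) ℝ) (F : Matrix (Fin r) (Fin n) ℝ)
    (h : ∀ x : Fin n → ℝ, O.mulVec x = 0 → F.mulVec x = 0) :
    ∃ G : Matrix (Fin r) (Fin m) ℝ, F = G * O := by
  have hk : LinearMap.ker O.mulVecLin ≤ LinearMap.ker F.mulVecLin := fun x hx => h x hx
  let e := (O.mulVecLin).quotKerEquivRange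
  let f0 : ((Fin n → ℝ) ⧸ LinearMap.ker O.mulVecLin) →ₗ[ℝ] (Fin r → ℝ) :=
    Submodule.liftQ _ F.mulVecLin hk
  let f : LinearMap.range O.mulVecLin →ₗ[ℝ] (Fin r → ℝ) := f0 ∘ₗ (e.symm : _ →ₗ[ℝ] _)
  obtain ⟨L, hL⟩ := LinearMap.exists_extend f
  refine ⟨LinearMap.toMatrix' L, ?_⟩
  have key : F.mulVecLin = L ∘ₗ O.mulVecLin := by
    apply LinearMap.ext; intro x
    have h1 : (⟨O.mulVecLin x, LinearMap.mem_range_self _ x⟩ : LinearMap.range O.mulVecLin)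
        = e (Submodule.Quotient.mk x) := by
      apply Subtype.ext
      simp [e, LinearMap.quotKerEquivRange_apply_mk]
    have h2 : L (O.mulVecLin x)
        = f ⟨O.mulVecLin x, LinearMap.mem_range_self _ x⟩ := by
      rw [← hL]; rfl
    show F.mulVecLin x = L (O.mulVecLin x)
    rw [h2, h1]
    simp [f, f0]
  apply Matrix.toLin'.injective
  rw [Matrix.toLin'_apply', Matrix.toLin'_apply', Matrix.mulVecLin_mul, key]
  congr 1
  exact (Matrix.toLin'_toMatrix' L).symm |>.trans (Matrix.toLin'_apply' _)

lemma rank_eq_finrank {α β : Type*} [Fintype β] (A : Matrix α β ℝ) :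
    A.rank = Module.finrank ℝ (LinearMap.range A.mulVecLin) := rfl

lemma mul_transpose_range_eq {m n : ℕ} (O : Matrix (Fin m) (Fin n) ℝ) :
    LinearMap.range (O * Oᵀ).mulVecLin = LinearMap.range O.mulVecLin := by
  apply Submodule.eq_of_le_of_finrank_le
  · rw [Matrix.mulVecLin_mul]
    exact LinearMap.range_comp_le_range _ _
  · exact le_of_eq ((rank_eq_finrank O).symm.trans
      ((Matrix.rank_self_mul_transpose O).symm.trans (rank_eq_finrank _)))

lemma rank_mul_transpose_of_mul {m n r : ℕ} (O : Matrix (Fin m) (Fin n) ℝ)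
    (F : Matrix (Fin r) (Fin n) ℝ) (G : Matrix (Fin r) (Fin m) ℝ) (hG : F = G * O) :
    (F * Oᵀ).rank = F.rank := by
  apply le_antisymm (Matrix.rank_mul_le_left _ _)
  obtain ⟨Y, hY⟩ := col_fact O (O * Oᵀ) (le_of_eq (mul_transpose_range_eq O).symm)
  have : F = (F * Oᵀ) * Y := by
    rw [hG, Matrix.mul_assoc, Matrix.mul_assoc, ← Matrix.mul_assoc O, ← hY]
  conv_lhs => rw [this]
  exact Matrix.rank_mul_le_left _ _

/-- Matrix-level weak/strong duality between the functional observability rank test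
`rank([O; F]) = rank(O)` and the output controllability rank test
`rank(F·Oᵀ) = rank(F)`. If `rank([O; F]) = rank(O)`, then `F = G·O` for some `G` and
consequently `rank(F·Oᵀ) = rank(F)`. Conversely, if additionally `rank(F) = r` and
`F(Ker O) = {0}`, then `rank(F·Oᵀ) = r` implies `rank([O; F]) = rank(O)`. -/
theorem matrix_weak_and_strong_duality {m n r : ℕ}
    (O : Matrix (Fin m) (Fin n) ℝ) (F : Matrix (Fin r) (Fin n) ℝ) :
    ((Matrix.fromRows O F).rank = O.rank →
      (∃ G : Matrix (Fin r) (Fin m) ℝ, F = G * O) ∧ (F * Oᵀ).rank = F.rank) ∧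
    (F.rank = r → (∀ x : Fin n → ℝ, O.mulVec x = 0 → F.mulVec x = 0) →
      (F * Oᵀ).rank = r → (Matrix.fromRows O F).rank = O.rank) := by
  constructor
  · intro h
    have hsup : LinearMap.range (Matrix.fromRows O F)ᵀ.mulVecLin
        = LinearMap.range Oᵀ.mulVecLin ⊔ LinearMap.range Fᵀ.mulVecLin := by
      rw [Matrix.transpose_fromRows, range_fromCols]
    have heq : LinearMap.range Oᵀ.mulVecLin
        = LinearMap.range Oᵀ.mulVecLin ⊔ LinearMap.range Fᵀ.mulVecLin := by
      apply Submodule.eq_of_le_of_finrank_le le_sup_left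
      rw [← hsup, ← rank_eq_finrank, ← rank_eq_finrank, Matrix.rank_transpose,
        Matrix.rank_transpose, h]
    have hle : LinearMap.range Fᵀ.mulVecLin ≤ LinearMap.range Oᵀ.mulVecLin := by
      rw [heq]; exact le_sup_right
    obtain ⟨G, hG⟩ := row_fact F O hle
    exact ⟨⟨G, hG⟩, rank_mul_transpose_of_mul O F G hG⟩
  · intro _ hker _
    obtain ⟨G, hG⟩ := ker_fact O F hker
    exact rank_fromRows_of_mul O F G hG
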